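/- Let a, M be real numbers, define Δ_r(r) = r² − 2Mr + a² and Δ_θ(p) = 1 − p², and on the open set U = {(r,p) ∈ ℝ² : r² + a²p² ≠ 0} define Z(r,p) = (Δ_r(r) − a²Δ_θ(p))/(r² + a²p²) + i·2aMp/(r² + a²p²). Then Z satisfies the Ernst equation at every point of U: (Re Z)·(∂_r(Δ_r ∂_r Z) + ∂_p(Δ_θ ∂_p Z)) = Δ_r(∂_r Z)² + Δ_θ(∂_p Z)². -/

import Mathlib

open Real

/-- Partial derivative in the first (radial) coordinate of a complex-valued function. -/
noncomputable def pderivRC (F : ℝ × ℝ → ℂ) (x : ℝ × ℝ) : ℂ :=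
  deriv (fun s : ℝ => F (s, x.2)) x.1

/-- Partial derivative in the second (angular) coordinate of a complex-valued function. -/
noncomputable def pderivPC (F : ℝ × ℝ → ℂ) (x : ℝ × ℝ) : ℂ :=
  deriv (fun t : ℝ => F (x.1, t)) x.2

lemma aux_zero (a r p : ℝ) : ((r:ℂ) + a*p*Complex.I = 0) ↔ r^2 + a^2*p^2 = 0 := by
  constructor
  · intro h
    have h1 := congrArg Complex.re h
    have h2 := congrArg Complex.im h
    simp at h1 h2
    rcases h2 with h2 | h2 <;> simp [h1, h2]
  · intro h
    have h1 : r = 0 := by nlinarith [sq_nonneg r, sq_nonneg (a*p)]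
    have h2 : (a*p)^2 = 0 := by nlinarith [sq_nonneg r, sq_nonneg (a*p)]
    have h3 : a*p = 0 := sq_eq_zero_iff.mp h2
    have h4 : (a:ℂ)*(p:ℂ) = 0 := by exact_mod_cast h3
    simp [h1, h4]

set_option maxHeartbeats 2000000 in
/-- The conjugate Ernst potential of the Kerr solution,
`Z = (Δ_r - a²Δ_θ)/(r² + a²p²) + i·2aMp/(r² + a²p²)` with `Δ_r = r² - 2Mr + a²`
and `Δ_θ = 1 - p²`, satisfies the Ernst equation wherever `r² + a²p² ≠ 0`. -/
theorem stmt_7 (a M : ℝ) (Δr Δθ : ℝ → ℝ)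
    (hΔr : ∀ r : ℝ, Δr r = r^2 - 2*M*r + a^2)
    (hΔθ : ∀ p : ℝ, Δθ p = 1 - p^2)
    (Z : ℝ × ℝ → ℂ)
    (hZ : ∀ x : ℝ × ℝ,
      Z x = (((Δr x.1 - a^2 * Δθ x.2) / (x.1^2 + a^2 * x.2^2) : ℝ) : ℂ)
        + Complex.I * ((2*a*M*x.2 / (x.1^2 + a^2 * x.2^2) : ℝ) : ℂ))
    (x : ℝ × ℝ) (hx : x.1^2 + a^2 * x.2^2 ≠ 0) :
    ((Z x).re : ℂ) *
        (pderivRC (fun y => (Δr y.1 : ℂ) * pderivRC Z y) x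
          + pderivPC (fun y => (Δθ y.2 : ℂ) * pderivPC Z y) x)
      = (Δr x.1 : ℂ) * (pderivRC Z x)^2 + (Δθ x.2 : ℂ) * (pderivPC Z x)^2 := by
  -- Z = 1 - 2M/(r + a p I) on U
  have hzw : ∀ y : ℝ × ℝ, ((y.1:ℂ) + a*y.2*Complex.I) ≠ 0 →
      Z y = 1 - 2*M*(((y.1:ℂ) + a*y.2*Complex.I)⁻¹) := by
    intro y hy
    have hρ : y.1^2 + a^2*y.2^2 ≠ 0 := fun h => hy ((aux_zero a y.1 y.2).mpr h)
    have hρc : ((y.1:ℂ))^2 + (a:ℂ)^2*(y.2:ℂ)^2 ≠ 0 := by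
      have : ((y.1^2 + a^2*y.2^2 : ℝ):ℂ) ≠ 0 := by exact_mod_cast hρ
      push_cast at this; convert this using 2
    rw [hZ, hΔr, hΔθ]
    push_cast
    field_simp
    linear_combination (2*(M:ℂ)*(a:ℂ)^2*(y.2:ℂ)^2) * Complex.I_sq
  -- radial first derivative of Z
  have hdR : ∀ y : ℝ × ℝ, ((y.1:ℂ) + a*y.2*Complex.I) ≠ 0 →
      HasDerivAt (fun s : ℝ => Z (s, y.2))
        (2*M*(((y.1:ℂ) + a*y.2*Complex.I)^2)⁻¹) y.1 := by
    intro y hy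
    have hcont : Continuous fun s : ℝ => (s:ℂ) + a*y.2*Complex.I :=
      Complex.continuous_ofReal.add continuous_const
    have hopen : IsOpen {s : ℝ | (s:ℂ) + a*y.2*Complex.I ≠ 0} :=
      (isOpen_compl_singleton (x := (0:ℂ))).preimage hcont
    have h0 : HasDerivAt (fun z : ℂ => z + (a:ℂ)*y.2*Complex.I) 1 ((y.1:ℝ):ℂ) :=
      (hasDerivAt_id _).add_const _
    have h1 := (((h0.inv hy).const_mul (2*M:ℂ)).const_sub 1).comp_ofReal
    have h2 : HasDerivAt (fun s : ℝ => Z (s, y.2))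
        (-(2*M*(-1/((y.1:ℂ) + a*y.2*Complex.I)^2))) y.1 := by
      refine h1.congr_of_eventuallyEq ?_
      filter_upwards [hopen.mem_nhds hy] with s hs
      exact hzw (s, y.2) hs
    convert h2 using 1
    field_simp
  -- angular first derivative of Z
  have hdP : ∀ y : ℝ × ℝ, ((y.1:ℂ) + a*y.2*Complex.I) ≠ 0 →
      HasDerivAt (fun t : ℝ => Z (y.1, t))
        (2*M*((a:ℂ)*Complex.I)*(((y.1:ℂ) + a*y.2*Complex.I)^2)⁻¹) y.2 := by
    intro y hy
    have hcont : Continuous fun t : ℝ => (y.1:ℂ) + a*t*Complex.I :=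
      continuous_const.add ((continuous_const.mul Complex.continuous_ofReal).mul continuous_const)
    have hopen : IsOpen {t : ℝ | (y.1:ℂ) + a*t*Complex.I ≠ 0} :=
      (isOpen_compl_singleton (x := (0:ℂ))).preimage hcont
    have h0 : HasDerivAt (fun z : ℂ => (y.1:ℂ) + (a:ℂ)*z*Complex.I)
        ((a:ℂ)*1*Complex.I) ((y.2:ℝ):ℂ) :=
      (((hasDerivAt_id _).const_mul (a:ℂ)).mul_const Complex.I).const_add _
    have h1 := (((h0.inv hy).const_mul (2*M:ℂ)).const_sub 1).comp_ofReal
    have h2 : HasDerivAt (fun t : ℝ => Z (y.1, t))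
        (-(2*M*(-((a:ℂ)*1*Complex.I)/((y.1:ℂ) + a*y.2*Complex.I)^2))) y.2 := by
      refine h1.congr_of_eventuallyEq ?_
      filter_upwards [hopen.mem_nhds hy] with t ht
      exact hzw (y.1, t) ht
    convert h2 using 1
    field_simp
  have hw : ((x.1:ℂ) + a*x.2*Complex.I) ≠ 0 := fun h => hx ((aux_zero a x.1 x.2).mp h)
  -- first order derivs at x
  have hpR : deriv (fun s : ℝ => Z (s, x.2)) x.1
      = 2*M*((((x.1:ℂ) + a*x.2*Complex.I))^2)⁻¹ := (hdR x hw).deriv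
  have hpP : deriv (fun t : ℝ => Z (x.1, t)) x.2
      = 2*M*((a:ℂ)*Complex.I)*((((x.1:ℂ) + a*x.2*Complex.I))^2)⁻¹ := (hdP x hw).deriv
  -- second order radial derivative
  have hcontR : Continuous fun s : ℝ => (s:ℂ) + a*x.2*Complex.I :=
    Complex.continuous_ofReal.add continuous_const
  have hopenR : IsOpen {s : ℝ | (s:ℂ) + a*x.2*Complex.I ≠ 0} :=
    (isOpen_compl_singleton (x := (0:ℂ))).preimage hcontR
  have hpolyR : HasDerivAt (fun z : ℂ => z^2 - 2*M*z + (a:ℂ)^2)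
      ((2:ℕ)*((x.1:ℂ))^1*1 - 2*M*1) ((x.1:ℝ):ℂ) :=
    (((hasDerivAt_id _).pow 2).sub ((hasDerivAt_id _).const_mul (2*M:ℂ))).add_const _
  have hqR : HasDerivAt (fun z : ℂ => (z + (a:ℂ)*x.2*Complex.I)^2)
      ((2:ℕ)*((x.1:ℂ) + a*x.2*Complex.I)^1*1) ((x.1:ℝ):ℂ) :=
    ((hasDerivAt_id _).add_const _).pow 2
  have hmulR := ((hpolyR.mul ((hqR.inv (pow_ne_zero 2 hw)).const_mul (2*M:ℂ)))).comp_ofReal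
  have hevR : (fun s : ℝ => ((Δr s : ℝ):ℂ) * deriv (fun s' : ℝ => Z (s', x.2)) s)
      =ᶠ[nhds x.1] fun s : ℝ =>
        (((s:ℂ))^2 - 2*M*(s:ℂ) + (a:ℂ)^2) * (2*M*((((s:ℂ) + a*x.2*Complex.I)^2)⁻¹)) := by
    filter_upwards [hopenR.mem_nhds hw] with s hs
    have hd := (hdR (s, x.2) hs).deriv
    simp only at hd
    rw [hd, hΔr]
    push_cast
    ring
  have hd2R := (HasDerivAt.congr_of_eventuallyEq hmulR hevR).deriv
  -- second order angular derivative
  have hcontP : Continuous fun t : ℝ => (x.1:ℂ) + a*t*Complex.I :=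
    continuous_const.add ((continuous_const.mul Complex.continuous_ofReal).mul continuous_const)
  have hopenP : IsOpen {t : ℝ | (x.1:ℂ) + a*t*Complex.I ≠ 0} :=
    (isOpen_compl_singleton (x := (0:ℂ))).preimage hcontP
  have hpolyP : HasDerivAt (fun z : ℂ => 1 - z^2)
      (-((2:ℕ)*((x.2:ℂ))^1*1)) ((x.2:ℝ):ℂ) :=
    ((hasDerivAt_id _).pow 2).const_sub 1
  have hqP : HasDerivAt (fun z : ℂ => ((x.1:ℂ) + (a:ℂ)*z*Complex.I)^2)
      ((2:ℕ)*((x.1:ℂ) + a*x.2*Complex.I)^1*((a:ℂ)*1*Complex.I)) ((x.2:ℝ):ℂ) :=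
    ((((hasDerivAt_id _).const_mul (a:ℂ)).mul_const Complex.I).const_add _).pow 2
  have hmulP := ((hpolyP.mul ((hqP.inv (pow_ne_zero 2 hw)).const_mul
    (2*M*((a:ℂ)*Complex.I))))).comp_ofReal
  have hevP : (fun t : ℝ => ((Δθ t : ℝ):ℂ) * deriv (fun t' : ℝ => Z (x.1, t')) t)
      =ᶠ[nhds x.2] fun t : ℝ =>
        ((1:ℂ) - ((t:ℂ))^2) * (2*M*((a:ℂ)*Complex.I)*((((x.1:ℂ) + a*t*Complex.I)^2)⁻¹)) := by
    filter_upwards [hopenP.mem_nhds hw] with t ht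
    have hd := (hdP (x.1, t) ht).deriv
    simp only at hd
    rw [hd, hΔθ]
    push_cast
    ring
  have hd2P := (HasDerivAt.congr_of_eventuallyEq hmulP hevP).deriv
  -- real part of Z
  have hre : ((Z x).re : ℂ) = (((Δr x.1 - a^2 * Δθ x.2) / (x.1^2 + a^2 * x.2^2) : ℝ) : ℂ) := by
    rw [hZ]
    simp only [Complex.add_re, Complex.mul_re, Complex.I_re, Complex.I_im,
      Complex.ofReal_re, Complex.ofReal_im]
    push_cast
    ring
  have hρc : ((x.1:ℂ))^2 + (a:ℂ)^2*(x.2:ℂ)^2 ≠ 0 := by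
    have : ((x.1^2 + a^2*x.2^2 : ℝ):ℂ) ≠ 0 := by exact_mod_cast hx
    push_cast at this; convert this using 2
  simp only [pderivRC, pderivPC]
  rw [hpR, hpP, hd2R, hd2P, hre, hΔr, hΔθ]
  simp only [Pi.inv_apply]
  push_cast
  field_simp
  rw [Complex.ext_iff]
  constructor <;>
  · simp only [pow_succ, pow_zero, one_mul, Complex.add_re, Complex.add_im, Complex.sub_re,
      Complex.sub_im, Complex.mul_re, Complex.mul_im, Complex.neg_re, Complex.neg_im,
      Complex.ofReal_re, Complex.ofReal_im, Complex.I_re, Complex.I_im, Complex.one_re,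
      Complex.one_im, Complex.re_ofNat, Complex.im_ofNat, Complex.natCast_re, Complex.natCast_im]
    ring
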